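/- Let K be a quadratically closed field and A₁, …, Aₙ ∈ SL(2,K). The subgroup of SL(2,K) generated by A₁, …, Aₙ is reducible if and only if for all indices i, j, k ∈ {1, …, n}, the subgroup generated by A_i, A_j, A_k is reducible (equivalently, for all possible choices of indices i, j, k, one has Δ(A_i,A_j) = 0 and Δ(A_i, A_iA_jA_k) = 0). -/

import Mathlib

/-- `SL(2,K)`: 2×2 matrices of determinant 1. -/
abbrev SL2 (K : Type*) [CommRing K] := Matrix.SpecialLinearGroup (Fin 2) K

/-- A field is quadratically closed if every monic quadratic has a root. -/
def QuadClosed (K : Type*) [Field K] : Prop :=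
  ∀ a b : K, ∃ x : K, x ^ 2 + a * x + b = 0

/-- The trace of an element of `SL(2,K)`. -/
def trM {K : Type*} [CommRing K] (A : SL2 K) : K :=
  Matrix.trace (A : Matrix (Fin 2) (Fin 2) K)

/-- `f : G → K` is an `SL(2,K)` character: the trace function of some representation. -/
def IsSL2Character {K : Type*} [CommRing K] {G : Type*} [Group G] (f : G → K) : Prop :=
  ∃ ρ : G →* SL2 K, ∀ g : G, f g = trM (ρ g)

/-- A subgroup of `SL(2,K)` is reducible if some 1-dimensional subspace (the span of a
nonzero vector `v`) is invariant under all its elements. -/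
def IsReducibleSubgroup {K : Type*} [Field K] (H : Subgroup (SL2 K)) : Prop :=
  ∃ v : Fin 2 → K, v ≠ 0 ∧ ∀ A ∈ H, ∃ c : K,
    Matrix.mulVec (A : Matrix (Fin 2) (Fin 2) K) v = c • v

/-- A representation to `SL(2,K)` is reducible if some 1-dimensional subspace is invariant
under the image. -/
def IsReducibleRep {K : Type*} [Field K] {G : Type*} [Group G] (ρ : G →* SL2 K) : Prop :=
  ∃ v : Fin 2 → K, v ≠ 0 ∧ ∀ g : G, ∃ c : K,
    Matrix.mulVec ((ρ g : SL2 K) : Matrix (Fin 2) (Fin 2) K) v = c • v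

/-- `Δ(A,B) = tr(A)² + tr(B)² + tr(AB)² − tr(A)·tr(B)·tr(AB) − 4`. -/
def Delta {K : Type*} [CommRing K] (A B : SL2 K) : K :=
  trM A ^ 2 + trM B ^ 2 + trM (A * B) ^ 2 - trM A * trM B * trM (A * B) - 4

namespace SL2Aux

variable {K : Type*} [Field K]

open Matrix

/-- cross product of two vectors in K². -/
def cross (v w : Fin 2 → K) : K := v 0 * w 1 - v 1 * w 0

lemma cross_swap (v w : Fin 2 → K) : cross w v = - cross v w := by
  simp [cross]; ring

lemma vec_ne_zero_iff {v : Fin 2 → K} : v ≠ 0 ↔ v 0 ≠ 0 ∨ v 1 ≠ 0 := by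
  constructor
  · intro h
    by_contra hc
    push_neg at hc
    exact h (funext fun i => by fin_cases i <;> simp [hc.1, hc.2])
  · rintro (h | h) h0 <;> simp [h0] at h

lemma cross_eq_zero_imp {v w : Fin 2 → K} (hv : v ≠ 0) (h : cross v w = 0) :
    ∃ c : K, w = c • v := by
  rcases vec_ne_zero_iff.1 hv with h0 | h1
  · refine ⟨w 0 / v 0, funext fun i => ?_⟩
    fin_cases i
    · simp [h0]
    · simp only [Pi.smul_apply, smul_eq_mul, Fin.mk_zero, Fin.mk_one]
      field_simp
      unfold cross at h
      linear_combination h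
  · refine ⟨w 1 / v 1, funext fun i => ?_⟩
    fin_cases i
    · simp only [Pi.smul_apply, smul_eq_mul, Fin.mk_zero, Fin.mk_one]
      field_simp
      unfold cross at h
      linear_combination -h
    · simp [h1]

/-- `M` fixes the line spanned by `v`. -/
def Fixes (M : SL2 K) (v : Fin 2 → K) : Prop :=
  ∃ c : K, Matrix.mulVec (M : Matrix (Fin 2) (Fin 2) K) v = c • v

lemma fixes_smul {M : SL2 K} {v : Fin 2 → K} (h : Fixes M v) (c : K) :
    Fixes M (c • v) := by
  obtain ⟨e, he⟩ := h
  exact ⟨e, by rw [Matrix.mulVec_smul, he, smul_comm]⟩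

lemma fixes_of_cross {M : SL2 K} {v w : Fin 2 → K} (hv : v ≠ 0)
    (h : cross v w = 0) (hf : Fixes M v) : Fixes M w := by
  obtain ⟨c, rfl⟩ := cross_eq_zero_imp hv h
  exact fixes_smul hf c

lemma fixes_mul {M N : SL2 K} {v : Fin 2 → K} (hM : Fixes M v) (hN : Fixes N v) :
    Fixes (M * N) v := by
  obtain ⟨c, hc⟩ := hM
  obtain ⟨d, hd⟩ := hN
  refine ⟨c * d, ?_⟩
  rw [Matrix.SpecialLinearGroup.coe_mul, ← Matrix.mulVec_mulVec, hd, Matrix.mulVec_smul, hc,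
    smul_smul, mul_comm]

lemma fixes_inv {M : SL2 K} {v : Fin 2 → K} (hM : Fixes M v) : Fixes M⁻¹ v := by
  obtain ⟨c, hc⟩ := hM
  have hid : Matrix.mulVec ((M⁻¹ : SL2 K) : Matrix (Fin 2) (Fin 2) K)
      (Matrix.mulVec (M : Matrix (Fin 2) (Fin 2) K) v) = v := by
    rw [Matrix.mulVec_mulVec, ← Matrix.SpecialLinearGroup.coe_mul, inv_mul_cancel,
      Matrix.SpecialLinearGroup.coe_one, Matrix.one_mulVec]
  by_cases hc0 : c = 0
  · have hv0 : v = 0 := by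
      rw [← hid, hc, hc0, zero_smul, Matrix.mulVec_zero]
    exact ⟨0, by simp [hv0]⟩
  · rw [hc, Matrix.mulVec_smul] at hid
    have h2 : c⁻¹ • (c • (Matrix.mulVec ((M⁻¹ : SL2 K) : Matrix (Fin 2) (Fin 2) K) v)) = c⁻¹ • v := by
      rw [hid]
    rw [smul_smul, inv_mul_cancel₀ hc0, one_smul] at h2
    exact ⟨c⁻¹, h2⟩


lemma basis_repr {v w : Fin 2 → K} (h : cross v w ≠ 0) (u : Fin 2 → K) :
    u = (cross u w / cross v w) • v + (cross v u / cross v w) • w := by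
  funext i
  fin_cases i <;>
  · simp only [Pi.add_apply, Pi.smul_apply, smul_eq_mul, Fin.mk_zero, Fin.mk_one]
    field_simp
    unfold cross
    ring

lemma coord_unique {v w : Fin 2 → K} (h : cross v w ≠ 0) {p q p' q' : K}
    (he : p • v + q • w = p' • v + q' • w) : p = p' ∧ q = q' := by
  have e0 := congrFun he 0
  have e1 := congrFun he 1
  simp only [Pi.add_apply, Pi.smul_apply, smul_eq_mul] at e0 e1
  unfold cross at h
  constructor
  · have h2 : (p - p') * (v 0 * w 1 - v 1 * w 0) = 0 := by linear_combination w 1 * e0 - w 0 * e1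
    rcases mul_eq_zero.1 h2 with h3 | h3
    · exact sub_eq_zero.1 h3
    · exact absurd h3 h
  · have h2 : (q - q') * (v 0 * w 1 - v 1 * w 0) = 0 := by linear_combination v 0 * e1 - v 1 * e0
    rcases mul_eq_zero.1 h2 with h3 | h3
    · exact sub_eq_zero.1 h3
    · exact absurd h3 h

lemma sub_smul_one_eq (M : Matrix (Fin 2) (Fin 2) K) (c : K) :
    M - c • 1 = !![M 0 0 - c, M 0 1; M 1 0, M 1 1 - c] := by
  ext i j
  fin_cases i <;> fin_cases j <;> simp [Matrix.one_apply]

/-- the eigenvalue equation. -/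
lemma eigen_quad {M : SL2 K} {v : Fin 2 → K} {c : K} (hv : v ≠ 0)
    (h : Matrix.mulVec (M : Matrix (Fin 2) (Fin 2) K) v = c • v) :
    c * c - trM M * c + 1 = 0 := by
  set N : Matrix (Fin 2) (Fin 2) K := (M : Matrix (Fin 2) (Fin 2) K) - c • 1 with hN
  have hNv : Matrix.mulVec N v = 0 := by
    rw [hN, Matrix.sub_mulVec, h, Matrix.smul_mulVec, Matrix.one_mulVec, sub_self]
  have hdet : N.det = 0 := Matrix.exists_mulVec_eq_zero_iff.1 ⟨v, hv, hNv⟩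
  have hdM : Matrix.det (M : Matrix (Fin 2) (Fin 2) K) = 1 := M.2
  rw [Matrix.det_fin_two] at hdM
  rw [hN, sub_smul_one_eq, Matrix.det_fin_two_of] at hdet
  unfold trM
  rw [Matrix.trace_fin_two]
  linear_combination hdet - hdM

lemma eigen_ne_zero {M : SL2 K} {v : Fin 2 → K} {c : K} (hv : v ≠ 0)
    (h : Matrix.mulVec (M : Matrix (Fin 2) (Fin 2) K) v = c • v) : c ≠ 0 := by
  intro h0
  have := eigen_quad hv h
  rw [h0] at this
  simp at this

lemma exists_eigen (hK : QuadClosed K) (M : SL2 K) :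
    ∃ v : Fin 2 → K, v ≠ 0 ∧ ∃ c : K, Matrix.mulVec (M : Matrix (Fin 2) (Fin 2) K) v = c • v := by
  obtain ⟨a, ha⟩ := hK (-(trM M)) 1
  set N : Matrix (Fin 2) (Fin 2) K := (M : Matrix (Fin 2) (Fin 2) K) - a • 1 with hN
  have hdM : Matrix.det (M : Matrix (Fin 2) (Fin 2) K) = 1 := M.2
  have hdet : N.det = 0 := by
    rw [Matrix.det_fin_two] at hdM
    rw [hN, sub_smul_one_eq, Matrix.det_fin_two_of]
    unfold trM at ha
    rw [Matrix.trace_fin_two] at ha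
    linear_combination ha + hdM
  obtain ⟨v, hv, hNv⟩ := Matrix.exists_mulVec_eq_zero_iff.2 hdet
  refine ⟨v, hv, a, ?_⟩
  rw [hN, Matrix.sub_mulVec, Matrix.smul_mulVec, Matrix.one_mulVec, sub_eq_zero] at hNv
  exact hNv


/-- Trace and determinant read off from action on a basis. -/
lemma conj_trace_det {v w : Fin 2 → K} (h : cross v w ≠ 0)
    (M : Matrix (Fin 2) (Fin 2) K) {p q r s : K}
    (hv : Matrix.mulVec M v = p • v + q • w) (hw : Matrix.mulVec M w = r • v + s • w) :
    Matrix.trace M = p + s ∧ Matrix.det M = p * s - q * r := by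
  set P : Matrix (Fin 2) (Fin 2) K := !![v 0, w 0; v 1, w 1] with hP
  set N : Matrix (Fin 2) (Fin 2) K := !![p, r; q, s] with hNdef
  have hdP : P.det = cross v w := by rw [hP, Matrix.det_fin_two_of]; unfold cross; ring
  have hMP : M * P = P * N := by
    have hv0 := congrFun hv 0
    have hv1 := congrFun hv 1
    have hw0 := congrFun hw 0
    have hw1 := congrFun hw 1
    simp only [Matrix.mulVec, dotProduct, Fin.sum_univ_two, Pi.add_apply, Pi.smul_apply,
      smul_eq_mul] at hv0 hv1 hw0 hw1
    ext i j
    fin_cases i <;> fin_cases j <;>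
      simp [hP, hNdef, Matrix.mul_apply, Fin.sum_univ_two]
    · linear_combination hv0
    · linear_combination hw0
    · linear_combination hv1
    · linear_combination hw1
  have hPunit : IsUnit P.det := by rw [hdP]; exact Ne.isUnit h
  have hM : M = P * N * P⁻¹ := by
    rw [← hMP, Matrix.mul_assoc, Matrix.mul_nonsing_inv P hPunit, Matrix.mul_one]
  constructor
  · rw [hM, Matrix.trace_mul_comm, ← Matrix.mul_assoc, Matrix.nonsing_inv_mul P hPunit,
      Matrix.one_mul, hNdef, Matrix.trace_fin_two_of]
  · have hd : M.det * P.det = P.det * N.det := by rw [← Matrix.det_mul, ← Matrix.det_mul, hMP]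
    have hPd : P.det ≠ 0 := by rw [hdP]; exact h
    have : M.det * P.det = N.det * P.det := by rw [hd, mul_comm]
    have := mul_right_cancel₀ hPd this
    rw [this, hNdef, Matrix.det_fin_two_of]
    ring

/-- Cayley–Hamilton applied to a vector, for `SL(2,K)`. -/
lemma cayley_vec (M : SL2 K) (v : Fin 2 → K) :
    Matrix.mulVec (M : Matrix (Fin 2) (Fin 2) K) (Matrix.mulVec (M : Matrix (Fin 2) (Fin 2) K) v)
      = trM M • Matrix.mulVec (M : Matrix (Fin 2) (Fin 2) K) v - v := by
  have hdM : Matrix.det (M : Matrix (Fin 2) (Fin 2) K) = 1 := M.2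
  rw [Matrix.det_fin_two] at hdM
  funext i
  fin_cases i <;>
    simp only [trM, Matrix.trace_fin_two, Fin.mk_zero, Fin.mk_one, Matrix.mulVec,
      dotProduct, Fin.sum_univ_two, Pi.sub_apply, Pi.smul_apply, smul_eq_mul]
  · linear_combination (-(v 0)) * hdM
  · linear_combination (-(v 1)) * hdM


/-- `M` is (projectively) scalar: it fixes every line. -/
def Scal (M : SL2 K) : Prop := ∀ x : Fin 2 → K, Fixes M x

lemma scalar_of_three {M : SL2 K} {u v w : Fin 2 → K}
    (hu : Fixes M u) (hv : Fixes M v) (hw : Fixes M w)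
    (hvw : cross v w ≠ 0) (hvu : cross v u ≠ 0) (hwu : cross w u ≠ 0) : Scal M := by
  obtain ⟨a, ha⟩ := hv
  obtain ⟨b, hb⟩ := hw
  obtain ⟨c, hc⟩ := hu
  set p := cross u w / cross v w with hpdef
  set q := cross v u / cross v w with hqdef
  have hrep : u = p • v + q • w := basis_repr hvw u
  have hp : p ≠ 0 := by
    apply div_ne_zero _ hvw
    intro h0
    apply hwu
    rw [cross_swap, h0, neg_zero]
  have hq : q ≠ 0 := div_ne_zero hvu hvw
  have h1 : Matrix.mulVec (M : Matrix (Fin 2) (Fin 2) K) u = (p * a) • v + (q * b) • w := by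
    rw [hrep, Matrix.mulVec_add, Matrix.mulVec_smul, Matrix.mulVec_smul, ha, hb,
      smul_smul, smul_smul]
  have h2 : Matrix.mulVec (M : Matrix (Fin 2) (Fin 2) K) u = (c * p) • v + (c * q) • w := by
    rw [hc, hrep, smul_add, smul_smul, smul_smul]
  obtain ⟨e1, e2⟩ := coord_unique hvw (h1.symm.trans h2)
  have hac : a = c := by
    have := mul_left_cancel₀ hp (by linear_combination e1 : p * a = p * c)
    exact this
  have hbc : b = c := by
    have := mul_left_cancel₀ hq (by linear_combination e2 : q * b = q * c)
    exact this
  intro x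
  refine ⟨a, ?_⟩
  have hxrep : x = (cross x w / cross v w) • v + (cross v x / cross v w) • w := basis_repr hvw x
  calc Matrix.mulVec (M : Matrix (Fin 2) (Fin 2) K) x
      = Matrix.mulVec (M : Matrix (Fin 2) (Fin 2) K)
        ((cross x w / cross v w) • v + (cross v x / cross v w) • w) := by rw [← hxrep]
    _ = (cross x w / cross v w) • (a • v) + (cross v x / cross v w) • (b • w) := by
        rw [Matrix.mulVec_add, Matrix.mulVec_smul, Matrix.mulVec_smul, ha, hb]
    _ = a • ((cross x w / cross v w) • v + (cross v x / cross v w) • w) := by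
        rw [hbc, ← hac]; module
    _ = a • x := by rw [← hxrep]

lemma delta_eq_zero_of_common {A B : SL2 K} {v : Fin 2 → K} (hv : v ≠ 0)
    (hA : Fixes A v) (hB : Fixes B v) : Delta A B = 0 := by
  obtain ⟨a, ha⟩ := hA
  obtain ⟨b, hb⟩ := hB
  have hab : Matrix.mulVec ((A * B : SL2 K) : Matrix (Fin 2) (Fin 2) K) v = (a * b) • v := by
    rw [Matrix.SpecialLinearGroup.coe_mul, ← Matrix.mulVec_mulVec, hb, Matrix.mulVec_smul, ha,
      smul_smul, mul_comm]
  have qa := eigen_quad hv ha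
  have qb := eigen_quad hv hb
  have qab := eigen_quad hv hab
  have ha0 : a ≠ 0 := eigen_ne_zero hv ha
  have hb0 : b ≠ 0 := eigen_ne_zero hv hb
  have hA' : trM A = a + a⁻¹ := by field_simp; linear_combination -qa
  have hB' : trM B = b + b⁻¹ := by field_simp; linear_combination -qb
  have hAB' : trM (A * B) = a * b + (a * b)⁻¹ := by field_simp; linear_combination -qab
  unfold Delta
  have ha1 : a * a⁻¹ = 1 := mul_inv_cancel₀ ha0
  have hb1 : b * b⁻¹ = 1 := mul_inv_cancel₀ hb0
  rw [hA', hB', hAB', mul_inv]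
  linear_combination (2 - b ^ 2 - (b⁻¹) ^ 2) * ha1 + (2 - a ^ 2 - (a⁻¹) ^ 2) * hb1

lemma common_of_delta (hK : QuadClosed K) (A B : SL2 K) (h : Delta A B = 0) :
    ∃ v : Fin 2 → K, v ≠ 0 ∧ Fixes A v ∧ Fixes B v := by
  obtain ⟨v, hv, a, hav⟩ := exists_eigen hK A
  by_cases hc : cross v (Matrix.mulVec (B : Matrix (Fin 2) (Fin 2) K) v) = 0
  · exact ⟨v, hv, ⟨a, hav⟩, cross_eq_zero_imp hv hc⟩
  · set w := Matrix.mulVec (B : Matrix (Fin 2) (Fin 2) K) v with hwdef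
    set α := cross (Matrix.mulVec (A : Matrix (Fin 2) (Fin 2) K) w) w / cross v w with hα
    set β := cross v (Matrix.mulVec (A : Matrix (Fin 2) (Fin 2) K) w) / cross v w with hβ
    have hAw : Matrix.mulVec (A : Matrix (Fin 2) (Fin 2) K) w = α • v + β • w :=
      basis_repr hc _
    have hAv : Matrix.mulVec (A : Matrix (Fin 2) (Fin 2) K) v = a • v + (0 : K) • w := by
      rw [hav]; module
    obtain ⟨htA, hdA⟩ := conj_trace_det hc (A : Matrix (Fin 2) (Fin 2) K) hAv hAw
    have htA' : trM A = a + β := htA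
    have hdA' : a * β = 1 := by
      have h1 : Matrix.det (A : Matrix (Fin 2) (Fin 2) K) = 1 := A.2
      rw [h1] at hdA
      linear_combination -hdA
    set t := trM B with ht
    have hBw : Matrix.mulVec (B : Matrix (Fin 2) (Fin 2) K) w = (-1 : K) • v + t • w := by
      rw [hwdef, cayley_vec B v, ← hwdef]
      module
    have hABv : Matrix.mulVec ((A * B : SL2 K) : Matrix (Fin 2) (Fin 2) K) v = α • v + β • w := by
      rw [Matrix.SpecialLinearGroup.coe_mul, ← Matrix.mulVec_mulVec, ← hwdef, hAw]
    have hABw : Matrix.mulVec ((A * B : SL2 K) : Matrix (Fin 2) (Fin 2) K) w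
        = (t * α - a) • v + (t * β) • w := by
      rw [Matrix.SpecialLinearGroup.coe_mul, ← Matrix.mulVec_mulVec, hBw, Matrix.mulVec_add,
        Matrix.mulVec_smul, Matrix.mulVec_smul, hav, hAw]
      module
    obtain ⟨htAB, _⟩ := conj_trace_det hc ((A * B : SL2 K) : Matrix (Fin 2) (Fin 2) K) hABv hABw
    have htAB' : trM (A * B) = α + t * β := htAB
    have hkey : α ^ 2 + t * (β - a) * α + (β - a) ^ 2 = 0 := by
      unfold Delta at h
      rw [htA', htAB', ← ht] at h
      linear_combination h + (t ^ 2 - 4) * hdA'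
    obtain ⟨x, hx⟩ := hK t 1
    have hfac : (α - x * (β - a)) * (α - (-t - x) * (β - a)) = 0 := by
      linear_combination hkey - (β - a) ^ 2 * hx
    have hroot : ∃ y : K, y ^ 2 + t * y + 1 = 0 ∧ α = y * (β - a) := by
      rcases mul_eq_zero.1 hfac with h1 | h1
      · exact ⟨x, hx, by linear_combination h1⟩
      · exact ⟨-t - x, by linear_combination hx, by linear_combination h1⟩
    obtain ⟨y, hy, hαy⟩ := hroot
    refine ⟨y • v + w, ?_, ⟨β, ?_⟩, ⟨y + t, ?_⟩⟩
    · intro h0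
      apply hc
      have hw0 : w = (-y) • v := by
        have : w = -(y • v) := by
          rw [eq_neg_iff_add_eq_zero, add_comm]
          exact h0
        rw [this, neg_smul]
      rw [hw0]
      simp only [cross, Pi.smul_apply, smul_eq_mul]
      ring
    · rw [Matrix.mulVec_add, Matrix.mulVec_smul, hav, hAw, hαy]
      have hcoef : y * a + y * (β - a) = β * y := by ring
      module
    · rw [Matrix.mulVec_add, Matrix.mulVec_smul, ← hwdef, hBw]
      have h2 : (-1 : K) = (y + t) * y := by linear_combination -hy
      rw [h2]
      module


/-- The stabilizer of the line spanned by `v`, as a subgroup. -/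
def lineStab (v : Fin 2 → K) : Subgroup (SL2 K) where
  carrier := {M : SL2 K | Fixes M v}
  one_mem' := ⟨1, by simp [Matrix.SpecialLinearGroup.coe_one, Matrix.one_mulVec]⟩
  mul_mem' := fun ha hb => fixes_mul ha hb
  inv_mem' := fun ha => fixes_inv ha

lemma reducible_closure_iff (S : Set (SL2 K)) :
    IsReducibleSubgroup (Subgroup.closure S) ↔ ∃ v : Fin 2 → K, v ≠ 0 ∧ ∀ A ∈ S, Fixes A v := by
  constructor
  · rintro ⟨v, hv, hfix⟩
    exact ⟨v, hv, fun M hM => hfix M (Subgroup.subset_closure hM)⟩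
  · rintro ⟨v, hv, hfix⟩
    refine ⟨v, hv, fun M hM => ?_⟩
    exact (Subgroup.closure_le (lineStab v)).2 (fun A hA => hfix A hA) hM

/-- The key three-matrices lemma: the vanishing `Δ` conditions give a common eigenvector. -/
lemma triple_of_delta (hK : QuadClosed K) (A B C : SL2 K)
    (hAB : Delta A B = 0) (hAC : Delta A C = 0) (hBC : Delta B C = 0)
    (hX : Delta A (A * B * C) = 0) :
    ∃ v : Fin 2 → K, v ≠ 0 ∧ Fixes A v ∧ Fixes B v ∧ Fixes C v := by
  by_cases hS : Scal A
  · obtain ⟨v, hv, hB, hC⟩ := common_of_delta hK B C hBC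
    exact ⟨v, hv, hS v, hB, hC⟩
  obtain ⟨v₁, hv₁, hAv₁, hBv₁⟩ := common_of_delta hK A B hAB
  obtain ⟨v₂, hv₂, hAv₂, hCv₂⟩ := common_of_delta hK A C hAC
  obtain ⟨u, hu, hAu, hXu⟩ := common_of_delta hK A (A * B * C) hX
  by_cases c12 : cross v₁ v₂ = 0
  · exact ⟨v₁, hv₁, hAv₁, hBv₁, fixes_of_cross hv₂ (by rw [cross_swap, c12, neg_zero]) hCv₂⟩
  by_cases c1u : cross v₁ u = 0
  · -- `ABC` fixes `v₁`, hence `BC` and then `C` fix `v₁`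
    have hXv₁ : Fixes (A * B * C) v₁ := fixes_of_cross hu (by rw [cross_swap, c1u, neg_zero]) hXu
    have hBC : Fixes (B * C) v₁ := by
      have h1 : Fixes (A⁻¹ * (A * B * C)) v₁ := fixes_mul (fixes_inv hAv₁) hXv₁
      have h2 : A⁻¹ * (A * B * C) = B * C := by group
      rwa [h2] at h1
    have hC : Fixes C v₁ := by
      have h1 : Fixes (B⁻¹ * (B * C)) v₁ := fixes_mul (fixes_inv hBv₁) hBC
      have h2 : B⁻¹ * (B * C) = C := by group
      rwa [h2] at h1
    exact ⟨v₁, hv₁, hAv₁, hBv₁, hC⟩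
  by_cases c2u : cross v₂ u = 0
  · have hXv₂ : Fixes (A * B * C) v₂ := fixes_of_cross hu (by rw [cross_swap, c2u, neg_zero]) hXu
    have hBC : Fixes (B * C) v₂ := by
      have h1 : Fixes (A⁻¹ * (A * B * C)) v₂ := fixes_mul (fixes_inv hAv₂) hXv₂
      have h2 : A⁻¹ * (A * B * C) = B * C := by group
      rwa [h2] at h1
    have hB : Fixes B v₂ := by
      have h1 : Fixes ((B * C) * C⁻¹) v₂ := fixes_mul hBC (fixes_inv hCv₂)
      have h2 : (B * C) * C⁻¹ = B := by group
      rwa [h2] at h1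
    exact ⟨v₂, hv₂, hAv₂, hB, hCv₂⟩
  exact absurd (scalar_of_three hAu hAv₁ hAv₂ c12 c1u c2u) hS

/-- If every triple has a common eigenvector, the whole family does. -/
lemma global_common {n : ℕ} (A : Fin n → SL2 K)
    (h : ∀ i j k : Fin n, ∃ v : Fin 2 → K, v ≠ 0 ∧
      Fixes (A i) v ∧ Fixes (A j) v ∧ Fixes (A k) v) :
    ∃ v : Fin 2 → K, v ≠ 0 ∧ ∀ i, Fixes (A i) v := by
  by_cases hs : ∀ i, Scal (A i)
  · refine ⟨![1, 0], ?_, fun i => hs i _⟩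
    intro h0
    have := congrFun h0 0
    simp at this
  push_neg at hs
  obtain ⟨i₀, hi₀⟩ := hs
  obtain ⟨v₁, hv₁, hA₁, -, -⟩ := h i₀ i₀ i₀
  by_cases h1 : ∀ j, Fixes (A j) v₁
  · exact ⟨v₁, hv₁, h1⟩
  push_neg at h1
  obtain ⟨j₀, hj₀⟩ := h1
  obtain ⟨v₂, hv₂, hA₂, hJ₂, -⟩ := h i₀ j₀ j₀
  have c12 : cross v₁ v₂ ≠ 0 := by
    intro h0
    exact hj₀ (fixes_of_cross hv₂ (by rw [cross_swap, h0, neg_zero]) hJ₂)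
  refine ⟨v₂, hv₂, fun k => ?_⟩
  obtain ⟨u, hu, hAu, hJu, hKu⟩ := h i₀ j₀ k
  by_cases c2u : cross v₂ u = 0
  · exact fixes_of_cross hu (by rw [cross_swap, c2u, neg_zero]) hKu
  by_cases c1u : cross v₁ u = 0
  · exact absurd (fixes_of_cross hu (by rw [cross_swap, c1u, neg_zero]) hJu) hj₀
  exact absurd (scalar_of_three hAu hA₁ hA₂ c12 c1u c2u) hi₀

end SL2Aux

theorem n_generator_reducible_iff_three_generator_reducible
    {K : Type*} [Field K] (hK : QuadClosed K) (n : ℕ) (A : Fin n → SL2 K) :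
    (IsReducibleSubgroup (Subgroup.closure (Set.range A)) ↔
        ∀ i j k : Fin n,
          IsReducibleSubgroup (Subgroup.closure ({A i, A j, A k} : Set (SL2 K)))) ∧
      (IsReducibleSubgroup (Subgroup.closure (Set.range A)) ↔
        ∀ i j k : Fin n,
          Delta (A i) (A j) = 0 ∧ Delta (A i) (A i * A j * A k) = 0) := by
  have main : IsReducibleSubgroup (Subgroup.closure (Set.range A)) ↔
      ∃ v : Fin 2 → K, v ≠ 0 ∧ ∀ i, SL2Aux.Fixes (A i) v := by
    rw [SL2Aux.reducible_closure_iff]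
    constructor
    · rintro ⟨v, hv, hf⟩
      exact ⟨v, hv, fun i => hf (A i) ⟨i, rfl⟩⟩
    · rintro ⟨v, hv, hf⟩
      refine ⟨v, hv, ?_⟩
      rintro M ⟨i, rfl⟩
      exact hf i
  have tripleiff : ∀ i j k : Fin n,
      IsReducibleSubgroup (Subgroup.closure ({A i, A j, A k} : Set (SL2 K))) ↔
      ∃ v : Fin 2 → K, v ≠ 0 ∧ SL2Aux.Fixes (A i) v ∧ SL2Aux.Fixes (A j) v ∧
        SL2Aux.Fixes (A k) v := by
    intro i j k
    rw [SL2Aux.reducible_closure_iff]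
    constructor
    · rintro ⟨v, hv, hf⟩
      exact ⟨v, hv, hf _ (by simp), hf _ (by simp), hf _ (by simp)⟩
    · rintro ⟨v, hv, h1, h2, h3⟩
      refine ⟨v, hv, ?_⟩
      rintro M hM
      simp only [Set.mem_insert_iff, Set.mem_singleton_iff] at hM
      rcases hM with rfl | rfl | rfl <;> assumption
  constructor
  · rw [main]
    constructor
    · rintro ⟨v, hv, hf⟩ i j k
      exact (tripleiff i j k).2 ⟨v, hv, hf i, hf j, hf k⟩
    · intro h
      exact SL2Aux.global_common A (fun i j k => (tripleiff i j k).1 (h i j k))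
  · rw [main]
    constructor
    · rintro ⟨v, hv, hf⟩ i j k
      exact ⟨SL2Aux.delta_eq_zero_of_common hv (hf i) (hf j),
        SL2Aux.delta_eq_zero_of_common hv (hf i)
          (SL2Aux.fixes_mul (SL2Aux.fixes_mul (hf i) (hf j)) (hf k))⟩
    · intro h
      exact SL2Aux.global_common A (fun i j k =>
        SL2Aux.triple_of_delta hK (A i) (A j) (A k) (h i j j).1 (h i k k).1 (h j k k).1
          (h i j k).2)
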